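/- Assume there exist finite positive Borel measures dA_{ij} (i,j ∈ {1,2}) on [0,1], with α_{ij}[w] := ∫₀¹ w(t) dA_{ij}(t) and 𝒦_{ij}(s) := ∫₀¹ k_i(t,s) dA_{ij}(t), such that for i,j = 1,2: α_{ij}[γ_{ij}] < 1; D_i := (1−α_{i1}[γ_{i1}])(1−α_{i2}[γ_{i2}]) − α_{i1}[γ_{i2}]α_{i2}[γ_{i1}] > 0; H_{ij}[u₁,u₂] ≤ α_{ij}[u_i] for every (u₁,u₂) ∈ K; and f_i(t,u₁,u₂) < N_i |u_i| for every t ∈ [0,1] and all u₁, u₂ ∈ ℝ with u_i ≠ 0, where 1/N_i := sup_{t∈[0,1]} { ∫₀¹ |k_i(t,s)| g_i(s) ds + (|γ_{i1}(t)|·(1−α_{i2}[γ_{i2}])/D_i + |γ_{i2}(t)|·α_{i2}[γ_{i1}]/D_i)·∫₀¹ 𝒦_{i1}(s) g_i(s) ds + (|γ_{i1}(t)|·α_{i1}[γ_{i2}]/D_i + |γ_{i2}(t)|·(1−α_{i1}[γ_{i1}])/D_i)·∫₀¹ 𝒦_{i2}(s) g_i(s) ds }. Then there is no nontrivial solution of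 the system in K: if (u,v) ∈ K and T(u,v) = (u,v), then (u,v) = (0,0). -/

import Mathlib

open MeasureTheory Set

/-- Supremum norm of `u` on `[0,1]`. -/
noncomputable def nrm (u : ℝ → ℝ) : ℝ := sSup ((fun t => |u t|) '' Icc (0:ℝ) 1)

/-- Minimum (infimum) of `u` on `[a,b]`. -/
noncomputable def minOnIcc (u : ℝ → ℝ) (a b : ℝ) : ℝ := sInf (u '' Icc a b)

/-- `i`-th component of the system operator `T`. -/
noncomputable def Tsys (k : Fin 2 → ℝ → ℝ → ℝ) (g : Fin 2 → ℝ → ℝ)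
    (f : Fin 2 → ℝ → ℝ → ℝ → ℝ) (γ : Fin 2 → Fin 2 → ℝ → ℝ)
    (H : Fin 2 → Fin 2 → (ℝ → ℝ) → (ℝ → ℝ) → ℝ)
    (i : Fin 2) (u v : ℝ → ℝ) (t : ℝ) : ℝ :=
  γ i 0 t * H i 0 u v + γ i 1 t * H i 1 u v +
    ∫ s in (0:ℝ)..1, k i t s * g i s * f i s (u s) (v s)

/-- The hypotheses of the first non-existence theorem for index `i`. -/
def NCond (k : Fin 2 → ℝ → ℝ → ℝ) (g : Fin 2 → ℝ → ℝ)
    (f : Fin 2 → ℝ → ℝ → ℝ → ℝ) (γ : Fin 2 → Fin 2 → ℝ → ℝ)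
    (H : Fin 2 → Fin 2 → (ℝ → ℝ) → (ℝ → ℝ) → ℝ)
    (K : Set ((ℝ → ℝ) × (ℝ → ℝ))) (μ : Fin 2 → Fin 2 → Measure ℝ) (i : Fin 2) : Prop :=
  (∀ j : Fin 2, IsFiniteMeasure (μ i j) ∧ μ i j ((Icc (0:ℝ) 1)ᶜ) = 0) ∧
  (∀ j : Fin 2, (∫ t, γ i j t ∂(μ i j)) < 1) ∧
  (0 < (1 - ∫ t, γ i 0 t ∂(μ i 0)) * (1 - ∫ t, γ i 1 t ∂(μ i 1)) -
    (∫ t, γ i 1 t ∂(μ i 0)) * (∫ t, γ i 0 t ∂(μ i 1))) ∧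
  (∀ j, ∀ w ∈ K, H i j w.1 w.2 ≤ ∫ t, (if i = 0 then w.1 else w.2) t ∂(μ i j)) ∧
  (∀ t ∈ Icc (0:ℝ) 1, ∀ x y : ℝ, (if i = 0 then x else y) ≠ 0 →
    f i t x y <
      (let D := (1 - ∫ t', γ i 0 t' ∂(μ i 0)) * (1 - ∫ t', γ i 1 t' ∂(μ i 1)) -
          (∫ t', γ i 1 t' ∂(μ i 0)) * (∫ t', γ i 0 t' ∂(μ i 1));
      (sSup ((fun t' => (∫ s in (0:ℝ)..1, |k i t' s| * g i s) +
        (|γ i 0 t'| * (1 - ∫ t'', γ i 1 t'' ∂(μ i 1)) / D +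
          |γ i 1 t'| * (∫ t'', γ i 0 t'' ∂(μ i 1)) / D) *
          (∫ s in (0:ℝ)..1, (∫ t'', k i t'' s ∂(μ i 0)) * g i s) +
        (|γ i 0 t'| * (∫ t'', γ i 1 t'' ∂(μ i 0)) / D +
          |γ i 1 t'| * (1 - ∫ t'', γ i 0 t'' ∂(μ i 0)) / D) *
          (∫ s in (0:ℝ)..1, (∫ t'', k i t'' s ∂(μ i 1)) * g i s)) '' Icc (0:ℝ) 1))⁻¹) *
      |(if i = 0 then x else y)|)


section Stmt17Aux
open Filter Function


namespace S17

lemma nrm_le {u : ℝ → ℝ} {M : ℝ} (h : ∀ t ∈ Icc (0:ℝ) 1, |u t| ≤ M) : nrm u ≤ M :=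
  csSup_le (Nonempty.image _ (nonempty_Icc.2 zero_le_one)) (by rintro x ⟨t, ht, rfl⟩; exact h t ht)

lemma nrm_bdd {u : ℝ → ℝ} (hu : ContinuousOn u (Icc 0 1)) :
    BddAbove ((fun t => |u t|) '' Icc (0:ℝ) 1) :=
  (isCompact_Icc.image_of_continuousOn hu.abs).bddAbove

lemma abs_le_nrm {u : ℝ → ℝ} (hu : ContinuousOn u (Icc 0 1)) {t : ℝ} (ht : t ∈ Icc (0:ℝ) 1) :
    |u t| ≤ nrm u := le_csSup (nrm_bdd hu) ⟨t, ht, rfl⟩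

lemma nrm_nonneg {u : ℝ → ℝ} (hu : ContinuousOn u (Icc 0 1)) : 0 ≤ nrm u :=
  le_trans (abs_nonneg _) (abs_le_nrm hu ⟨le_refl 0, zero_le_one⟩)

lemma exists_nrm_max {u : ℝ → ℝ} (hu : ContinuousOn u (Icc 0 1)) :
    ∃ t ∈ Icc (0:ℝ) 1, |u t| = nrm u := by
  have hc : IsCompact ((fun t => |u t|) '' Icc (0:ℝ) 1) := isCompact_Icc.image_of_continuousOn hu.abs
  have hne : ((fun t => |u t|) '' Icc (0:ℝ) 1).Nonempty := Nonempty.image _ (nonempty_Icc.2 zero_le_one)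
  obtain ⟨t, ht, hts⟩ := hc.sSup_mem hne
  exact ⟨t, ht, hts⟩

lemma le_minOnIcc {u : ℝ → ℝ} {a b m : ℝ} (hab : a ≤ b) (h : ∀ t ∈ Icc a b, m ≤ u t) :
    m ≤ minOnIcc u a b := le_csInf (Nonempty.image _ (nonempty_Icc.2 hab)) (by rintro x ⟨t, ht, rfl⟩; exact h t ht)

lemma minOnIcc_le {u : ℝ → ℝ} {a b : ℝ} (hu : ContinuousOn u (Icc 0 1))
    (h0a : 0 ≤ a) (hab : a ≤ b) (hb1 : b ≤ 1) {t : ℝ} (ht : t ∈ Icc a b) :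
    minOnIcc u a b ≤ u t := by
  have hsub : Icc a b ⊆ Icc (0:ℝ) 1 := Icc_subset_Icc h0a hb1
  have : BddBelow (u '' Icc a b) :=
    ((isCompact_Icc.image_of_continuousOn (hu.mono hsub))).bddBelow
  exact csInf_le this ⟨t, ht, rfl⟩

/-- clamp to [0,1] -/
noncomputable def cl (t : ℝ) : ℝ := max 0 (min 1 t)

lemma cl_mem (t : ℝ) : cl t ∈ Icc (0:ℝ) 1 :=
  ⟨le_max_left _ _, max_le zero_le_one (min_le_left _ _)⟩

lemma cl_eq {t : ℝ} (ht : t ∈ Icc (0:ℝ) 1) : cl t = t := by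
  simp only [cl, min_eq_right ht.2, max_eq_right ht.1]

lemma cl_continuous : Continuous cl := continuous_const.max (continuous_const.min continuous_id)

lemma cont_cl_comp {u : ℝ → ℝ} (hu : ContinuousOn u (Icc 0 1)) : Continuous (u ∘ cl) :=
  hu.comp_continuous cl_continuous cl_mem

end S17

noncomputable def μI : Measure ℝ := volume.restrict (Icc (0:ℝ) 1)

instance : SFinite μI := by unfold μI; infer_instance
instance : IsFiniteMeasure μI := by
  unfold μI
  exact ⟨by rw [Measure.restrict_apply_univ]; simp⟩

lemma ae_mem_Icc {μ : Measure ℝ} (h : μ ((Icc (0:ℝ) 1)ᶜ) = 0) : ∀ᵐ t ∂μ, t ∈ Icc (0:ℝ) 1 := by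
  rw [ae_iff]; exact h

lemma ae_mem_Icc_self : ∀ᵐ t ∂μI, t ∈ Icc (0:ℝ) 1 :=
  ae_restrict_mem measurableSet_Icc

lemma swap_ae {μ : Measure ℝ} [SFinite μ] {P : ℝ → ℝ → Prop}
    (hP : MeasurableSet {p : ℝ × ℝ | P p.1 p.2})
    (h : ∀ᵐ t ∂μ, ∀ᵐ s ∂μI, P t s) : ∀ᵐ s ∂μI, ∀ᵐ t ∂μ, P t s :=
  (Measure.ae_ae_comm hP).1 h

lemma phi_aemeasurable {f : ℝ → ℝ → ℝ → ℝ} {u v : ℝ → ℝ}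
    (hfm : ∀ x y, Measurable (fun t => f t x y))
    (hfc : ∀ᵐ t ∂μI, Continuous (fun p : ℝ × ℝ => f t p.1 p.2))
    (hu : Continuous u) (hv : Continuous v) :
    AEMeasurable (fun t => f t (u t) (v t)) μI := by
  set q : ℕ → ℝ → ℝ := fun n t => (⌊t * (n+1)⌋ : ℝ) / (n+1) with hq
  have hqt : ∀ t, Tendsto (fun n => q n t) atTop (nhds t) := by
    intro t
    have h1 : ∀ n : ℕ, t - 1/(n+1) ≤ q n t := by
      intro n
      show t - 1/(n+1) ≤ (⌊t * (n+1)⌋ : ℝ) / (n+1)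
      rw [sub_le_iff_le_add, ← add_div, le_div_iff₀ (by positivity)]
      nlinarith [Int.sub_one_lt_floor (t * ((n:ℝ)+1)), Int.lt_floor_add_one (t*((n:ℝ)+1))]
    have h2 : ∀ n : ℕ, q n t ≤ t := by
      intro n
      show (⌊t * (n+1)⌋ : ℝ) / (n+1) ≤ t
      rw [div_le_iff₀ (by positivity)]
      exact Int.floor_le _
    have hz : Tendsto (fun n : ℕ => 1/((n:ℝ)+1)) atTop (nhds 0) := by
      exact tendsto_one_div_add_atTop_nhds_zero_nat
    have hl : Tendsto (fun n : ℕ => t - 1/((n:ℝ)+1)) atTop (nhds t) := by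
      simpa using tendsto_const_nhds.sub hz
    exact tendsto_of_tendsto_of_tendsto_of_le_of_le hl tendsto_const_nhds h1 h2
  have hFm : ∀ n : ℕ, Measurable (fun t => f t (u (q n t)) (v (q n t))) := by
    intro n
    have hG : Measurable (fun p : ℝ × ℤ => f p.1 (u ((p.2 : ℝ)/(n+1))) (v ((p.2 : ℝ)/(n+1)))) :=
      measurable_from_prod_countable_left
        (fun z => by simpa using hfm (u ((z:ℝ)/(n+1))) (v ((z:ℝ)/(n+1))))
    have heq : (fun t => f t (u (q n t)) (v (q n t)))
        = (fun p : ℝ × ℤ => f p.1 (u ((p.2 : ℝ)/(n+1))) (v ((p.2 : ℝ)/(n+1))))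
          ∘ (fun t => (t, ⌊t * (n+1)⌋)) := rfl
    rw [heq]
    exact hG.comp (measurable_id.prodMk (Int.measurable_floor.comp (by measurability)))
  apply aemeasurable_of_tendsto_metrizable_ae atTop (fun n => (hFm n).aemeasurable)
  filter_upwards [hfc] with t hc
  have hpair : Tendsto (fun n => (u (q n t), v (q n t))) atTop (nhds (u t, v t)) :=
    (((hu.tendsto t).comp (hqt t)).prodMk_nhds ((hv.tendsto t).comp (hqt t)))
  exact (hc.tendsto (u t, v t)).comp hpair



instance : IsFiniteMeasure μI := by
  unfold μI; exact ⟨by rw [Measure.restrict_apply_univ]; simp⟩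

lemma wint_le {ρ ψ : ℝ → ℝ} {C : ℝ} (hC : 0 < C)
    (hρm : AEMeasurable ρ μI) (hρ0 : 0 ≤ᵐ[μI] ρ) (hρi : Integrable ρ μI)
    (hψm : AEMeasurable ψ μI) (hψ0 : 0 ≤ᵐ[μI] ψ) (hψC : ∀ᵐ s ∂μI, ψ s < C) :
    Integrable (fun s => ρ s * ψ s) μI ∧
    (∫ s, ρ s * ψ s ∂μI) ≤ C * ∫ s, ρ s ∂μI ∧
    (0 < ∫ s, ρ s ∂μI → (∫ s, ρ s * ψ s ∂μI) < C * ∫ s, ρ s ∂μI) := by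
  have hb : ∀ᵐ s ∂μI, ‖ρ s * ψ s‖ ≤ C * ρ s := by
    filter_upwards [hρ0, hψ0, hψC] with s h1 h2 h3
    rw [Real.norm_eq_abs, abs_of_nonneg (mul_nonneg h1 h2), mul_comm C]
    exact mul_le_mul_of_nonneg_left h3.le h1
  have hint : Integrable (fun s => ρ s * ψ s) μI :=
    Integrable.mono' (hρi.const_mul C) (hρm.mul hψm).aestronglyMeasurable hb
  have hle : (∫ s, ρ s * ψ s ∂μI) ≤ C * ∫ s, ρ s ∂μI := by
    rw [← integral_const_mul]
    apply integral_mono_ae hint (hρi.const_mul C)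
    filter_upwards [hρ0, hψC] with s h1 h3
    calc ρ s * ψ s ≤ ρ s * C := mul_le_mul_of_nonneg_left h3.le h1
    _ = C * ρ s := mul_comm _ _
  refine ⟨hint, hle, fun hpos => ?_⟩
  have hdiff : (0:ℝ) < ∫ s, ρ s * (C - ψ s) ∂μI := by
    have hintd : Integrable (fun s => ρ s * (C - ψ s)) μI := by
      have : (fun s => ρ s * (C - ψ s)) = fun s => ρ s * C - ρ s * ψ s := by
        ext s; ring
      rw [this]
      exact (hρi.mul_const C).sub hint
    have hnn : 0 ≤ᵐ[μI] fun s => ρ s * (C - ψ s) := by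
      filter_upwards [hρ0, hψC] with s h1 h3
      exact mul_nonneg h1 (by linarith)
    rw [integral_pos_iff_support_of_nonneg_ae hnn hintd]
    have hρsupp : 0 < μI (Function.support ρ) := by
      rw [← integral_pos_iff_support_of_nonneg_ae hρ0 hρi]; exact hpos
    refine lt_of_lt_of_le hρsupp (measure_mono_ae ?_)
    filter_upwards [hρ0, hψC] with s h1 h3 hs
    have hne : ρ s ≠ 0 := hs
    have h1' : 0 < ρ s := lt_of_le_of_ne h1 (Ne.symm hne)
    have hp : 0 < ρ s * (C - ψ s) := mul_pos h1' (by linarith)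
    exact Function.mem_support.mpr hp.ne'
  have hexp : (∫ s, ρ s * (C - ψ s) ∂μI) = C * (∫ s, ρ s ∂μI) - ∫ s, ρ s * ψ s ∂μI := by
    have : (fun s => ρ s * (C - ψ s)) = fun s => ρ s * C - ρ s * ψ s := by ext s; ring
    rw [this, integral_sub (hρi.mul_const C) hint, integral_mul_const, mul_comm]
  linarith [hexp ▸ hdiff]





lemma kernel_meas {k : ℝ → ℝ → ℝ} (μ : Measure ℝ) [SFinite μ]
    (hkm : Measurable (Function.uncurry k)) : Measurable fun s => ∫ t, k t s ∂μ := by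
  exact (hkm.stronglyMeasurable.integral_prod_left).measurable

lemma sect_meas {k : ℝ → ℝ → ℝ} (hkm : Measurable (Function.uncurry k)) (t : ℝ) :
    Measurable (fun s => k t s) := by
  have : (fun s => k t s) = Function.uncurry k ∘ (fun s => (t, s)) := rfl
  rw [this]; exact hkm.comp (measurable_const.prodMk measurable_id)

lemma sect_meas' {k : ℝ → ℝ → ℝ} (hkm : Measurable (Function.uncurry k)) (s : ℝ) :
    Measurable (fun t => k t s) := by
  have : (fun t => k t s) = Function.uncurry k ∘ (fun t => (t, s)) := rfl
  rw [this]; exact hkm.comp (measurable_id.prodMk measurable_const)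

lemma fubini_swap {k : ℝ → ℝ → ℝ} {ψ β : ℝ → ℝ} (μ : Measure ℝ) [IsFiniteMeasure μ]
    (hkm : Measurable (Function.uncurry k))
    (hψm : Measurable ψ) (hβm : Measurable β) (hβi : Integrable β μI)
    (hdom : ∀ᵐ t ∂μ, ∀ᵐ s ∂μI, ‖k t s * ψ s‖ ≤ β s) :
    Integrable (Function.uncurry fun t s => k t s * ψ s) (μ.prod μI) ∧
    (∫ t, (∫ s, k t s * ψ s ∂μI) ∂μ) = ∫ s, (∫ t, k t s ∂μ) * ψ s ∂μI := by
  have hFm : Measurable (Function.uncurry fun t s => k t s * ψ s) := by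
    have : Function.uncurry (fun t s => k t s * ψ s)
        = fun p : ℝ × ℝ => Function.uncurry k p * ψ p.2 := rfl
    rw [this]; exact hkm.mul (hψm.comp measurable_snd)
  have hβprod : Integrable (fun p : ℝ × ℝ => β p.2) (μ.prod μI) := by
    have h1 : AEStronglyMeasurable (fun p : ℝ × ℝ => β p.2) (μ.prod μI) :=
      (hβm.comp measurable_snd).aestronglyMeasurable
    rw [integrable_prod_iff h1]
    constructor
    · exact Eventually.of_forall (fun t => hβi)
    · simp only [norm_norm]
      exact integrable_const _
  have hdomp : ∀ᵐ p ∂(μ.prod μI), ‖Function.uncurry (fun t s => k t s * ψ s) p‖ ≤ β p.2 := by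
    have hset : MeasurableSet {p : ℝ × ℝ | ‖k p.1 p.2 * ψ p.2‖ ≤ β p.2} := by
      apply measurableSet_le
      · exact (hkm.mul (hψm.comp measurable_snd)).norm
      · exact hβm.comp measurable_snd
    exact (Measure.ae_prod_iff_ae_ae hset).2 hdom
  have hFi : Integrable (Function.uncurry fun t s => k t s * ψ s) (μ.prod μI) :=
    Integrable.mono' hβprod hFm.aestronglyMeasurable hdomp
  refine ⟨hFi, ?_⟩
  rw [integral_integral_swap hFi]
  apply integral_congr_ae (Eventually.of_forall fun s => ?_)
  exact integral_mul_const (ψ s) _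

lemma kernel_bound {k : ℝ → ℝ → ℝ} {Φ : ℝ → ℝ} (μ : Measure ℝ) [IsFiniteMeasure μ]
    (hkm : Measurable (Function.uncurry k)) (hΦm : Measurable Φ)
    (hkΦ : ∀ᵐ t ∂μ, ∀ᵐ s ∂μI, |k t s| ≤ Φ s) :
    ∀ᵐ s ∂μI, |∫ t, k t s ∂μ| ≤ (μ univ).toReal * Φ s ∧
      Integrable (fun t => k t s) μ := by
  have hset : MeasurableSet {p : ℝ × ℝ | |k p.1 p.2| ≤ Φ p.2} :=
    measurableSet_le hkm.abs (hΦm.comp measurable_snd)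
  have hsw : ∀ᵐ s ∂μI, ∀ᵐ t ∂μ, |k t s| ≤ Φ s := (Measure.ae_ae_comm hset).1 hkΦ
  filter_upwards [hsw] with s hs
  have hi : Integrable (fun t => k t s) μ := by
    apply Integrable.mono' (integrable_const (Φ s)) (sect_meas' hkm s).aestronglyMeasurable
    filter_upwards [hs] with t ht
    simpa using ht
  refine ⟨?_, hi⟩
  have := norm_integral_le_of_norm_le (integrable_const (Φ s))
    (by filter_upwards [hs] with t ht; simpa using ht) (f := fun t => k t s)
  rw [Real.norm_eq_abs] at this
  simp only [integral_const, smul_eq_mul] at this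
  exact this
lemma pos_factors {x y : ℝ} (hx : 0 ≤ x) (hy : 0 ≤ y) (h : 0 < x*y) : 0 < x ∧ 0 < y := by
  constructor
  · rcases hx.lt_or_eq with h'|h'
    · exact h'
    · exfalso; rw [← h'] at h; simp at h
  · rcases hy.lt_or_eq with h'|h'
    · exact h'
    · exfalso; rw [← h'] at h; simp at h

lemma solve2 {a00 a01 a10 a11 A0 A1 h0 h1 : ℝ} (hh0 : 0 ≤ h0) (hh1 : 0 ≤ h1)
    (ha01 : 0 ≤ a01) (ha10 : 0 ≤ a10) (ha00 : a00 < 1) (ha11 : a11 < 1)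
    (h1e : h0 ≤ a00*h0 + a01*h1 + A0) (h2e : h1 ≤ a10*h0 + a11*h1 + A1) :
    ((1-a00)*(1-a11) - a01*a10) * h0 ≤ (1-a11)*A0 + a01*A1 ∧
    ((1-a00)*(1-a11) - a01*a10) * h1 ≤ a10*A0 + (1-a00)*A1 := by
  have p1 : (1 - a11) * ((1-a00) * h0) ≤ (1 - a11) * (a01 * h1 + A0) :=
    mul_le_mul_of_nonneg_left (by linarith) (by linarith)
  have p2 : a01 * ((1 - a11) * h1) ≤ a01 * (a10 * h0 + A1) :=
    mul_le_mul_of_nonneg_left (by linarith) ha01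
  have p3 : (1 - a00) * ((1-a11) * h1) ≤ (1 - a00) * (a10 * h0 + A1) :=
    mul_le_mul_of_nonneg_left (by linarith) (by linarith)
  have p4 : a10 * ((1 - a00) * h0) ≤ a10 * (a01 * h1 + A0) :=
    mul_le_mul_of_nonneg_left (by linarith) ha10
  constructor
  · nlinarith [p1, p2]
  · nlinarith [p3, p4]

set_option maxHeartbeats 1600000 in
open S17 in
lemma core
    (k : ℝ → ℝ → ℝ) (g Φ φ u γ₀ γ₁ : ℝ → ℝ) (μ₀ μ₁ : Measure ℝ)
    (h₀ h₁ a b cc ct m : ℝ) (a00 a01 a10 a11 D KK0 KK1 : ℝ)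
    [IsFiniteMeasure μ₀] [IsFiniteMeasure μ₁]
    (hs₀ : μ₀ ((Icc (0:ℝ) 1)ᶜ) = 0) (hs₁ : μ₁ ((Icc (0:ℝ) 1)ᶜ) = 0)
    (h0a : 0 ≤ a) (hab : a ≤ b) (hb1 : b ≤ 1)
    (hu : ContinuousOn u (Icc 0 1))
    (hkm : Measurable (Function.uncurry k))
    (hkc : ∀ τ ∈ Icc (0:ℝ) 1, ∀ᵐ s ∂μI,
      Tendsto (fun t => |k t s - k τ s|) (nhdsWithin τ (Icc 0 1)) (nhds 0))
    (hΦm : Measurable Φ)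
    (hkΦ : ∀ t ∈ Icc (0:ℝ) 1, ∀ᵐ s ∂μI, |k t s| ≤ Φ s)
    (hklow : ∀ t ∈ Icc a b, ∀ᵐ s ∂μI, ct * Φ s ≤ k t s)
    (hct0 : 0 < ct)
    (hgm : Measurable g) (hg0 : 0 ≤ᵐ[μI] g)
    (hgΦ : Integrable (fun s => g s * Φ s) μI)
    (hcc : 0 < cc) (hccct : cc ≤ ct)
    (hcone : ∀ w : ℝ → ℝ, ContinuousOn w (Icc 0 1) → cc * nrm w ≤ minOnIcc w a b →
      0 ≤ ∫ t, w t ∂μ₀ ∧ 0 ≤ ∫ t, w t ∂μ₁)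
    (hγ₀c : ContinuousOn γ₀ (Icc 0 1)) (hγ₁c : ContinuousOn γ₁ (Icc 0 1))
    (hh₀ : 0 ≤ h₀) (hh₁ : 0 ≤ h₁)
    (hhb₀ : h₀ ≤ ∫ t, u t ∂μ₀) (hhb₁ : h₁ ≤ ∫ t, u t ∂μ₁)
    (hadef00 : a00 = ∫ t, γ₀ t ∂μ₀) (hadef01 : a01 = ∫ t, γ₁ t ∂μ₀)
    (hadef10 : a10 = ∫ t, γ₀ t ∂μ₁) (hadef11 : a11 = ∫ t, γ₁ t ∂μ₁)
    (hDdef : D = (1 - a00) * (1 - a11) - a01 * a10)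
    (hKK0 : KK0 = ∫ s in (0:ℝ)..1, (∫ t, k t s ∂μ₀) * g s)
    (hKK1 : KK1 = ∫ s in (0:ℝ)..1, (∫ t, k t s ∂μ₁) * g s)
    (ha01 : 0 ≤ a01) (ha10 : 0 ≤ a10)
    (ha00 : a00 < 1) (ha11 : a11 < 1) (hD : 0 < D)
    (hφm : Measurable φ) (hφ0 : 0 ≤ᵐ[μI] φ)
    (hm : 0 < m) (hr : 0 < nrm u)
    (hφlt : ∀ᵐ s ∂μI, φ s < m⁻¹ * nrm u)
    (hΨ : ∀ t ∈ Icc (0:ℝ) 1,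
      (∫ s in (0:ℝ)..1, |k t s| * g s) +
      (|γ₀ t| * (1 - a11) / D + |γ₁ t| * a10 / D) * KK0 +
      (|γ₀ t| * a01 / D + |γ₁ t| * (1 - a00) / D) * KK1 ≤ m)
    (hfix : ∀ t ∈ Icc (0:ℝ) 1,
      u t = γ₀ t * h₀ + γ₁ t * h₁ + ∫ s in (0:ℝ)..1, k t s * g s * φ s) :
    False := by
  -- basic abbreviations
  set r := nrm u with hrdef
  set C := m⁻¹ * r with hCdef
  have hC : 0 < C := mul_pos (inv_pos.2 hm) hr
  have hμI : μI = volume.restrict (Icc (0:ℝ) 1) := rfl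
  -- interval integral to μI conversion
  have ii_eq : ∀ ψ : ℝ → ℝ, (∫ s in (0:ℝ)..1, ψ s) = ∫ s, ψ s ∂μI := by
    intro ψ
    rw [intervalIntegral.integral_of_le zero_le_one, hμI]
    exact setIntegral_congr_set Ioc_ae_eq_Icc
  -- Φ nonneg a.e.
  have hΦ0 : 0 ≤ᵐ[μI] Φ := by
    filter_upwards [hkΦ 0 (by constructor <;> norm_num)] with s hs
    exact le_trans (abs_nonneg _) hs
  -- the data function ψ = g * φ
  set ψ : ℝ → ℝ := fun s => g s * φ s with hψdef
  have hψm : Measurable ψ := hgm.mul hφm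
  have hψ0 : 0 ≤ᵐ[μI] ψ := by
    filter_upwards [hg0, hφ0] with s h1 h2; exact mul_nonneg h1 h2
  have hψle : ∀ᵐ s ∂μI, ψ s ≤ g s * C := by
    filter_upwards [hg0, hφlt] with s h1 h2
    exact mul_le_mul_of_nonneg_left h2.le h1
  -- dominating function
  set β : ℝ → ℝ := fun s => g s * Φ s * C with hβdef
  have hβm : Measurable β := (hgm.mul hΦm).mul_const C
  have hβi : Integrable β μI := hgΦ.mul_const C
  have hdom : ∀ t ∈ Icc (0:ℝ) 1, ∀ᵐ s ∂μI, ‖k t s * ψ s‖ ≤ β s := by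
    intro t ht
    filter_upwards [hkΦ t ht, hg0, hφ0, hφlt, hΦ0] with s h1 h2 h3 h4 h5
    have : ‖k t s * ψ s‖ = |k t s| * ψ s := by
      rw [Real.norm_eq_abs, abs_mul, abs_of_nonneg (mul_nonneg h2 h3)]
    rw [this, hβdef]
    calc |k t s| * (g s * φ s) ≤ Φ s * (g s * C) := by
          apply mul_le_mul h1 (mul_le_mul_of_nonneg_left h4.le h2)
            (mul_nonneg h2 h3) h5
    _ = g s * Φ s * C := by ring
  have hdom₀ : ∀ᵐ t ∂μ₀, ∀ᵐ s ∂μI, ‖k t s * ψ s‖ ≤ β s := by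
    filter_upwards [ae_mem_Icc hs₀] with t ht using hdom t ht
  have hdom₁ : ∀ᵐ t ∂μ₁, ∀ᵐ s ∂μI, ‖k t s * ψ s‖ ≤ β s := by
    filter_upwards [ae_mem_Icc hs₁] with t ht using hdom t ht
  have fub₀ := fubini_swap μ₀ hkm hψm hβm hβi hdom₀
  have fub₁ := fubini_swap μ₁ hkm hψm hβm hβi hdom₁
  -- kernels
  set 𝒦₀ : ℝ → ℝ := fun s => ∫ t, k t s ∂μ₀ with h𝒦₀def
  set 𝒦₁ : ℝ → ℝ := fun s => ∫ t, k t s ∂μ₁ with h𝒦₁def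
  have h𝒦₀m : Measurable 𝒦₀ := kernel_meas μ₀ hkm
  have h𝒦₁m : Measurable 𝒦₁ := kernel_meas μ₁ hkm
  have hkΦae₀ : ∀ᵐ t ∂μ₀, ∀ᵐ s ∂μI, |k t s| ≤ Φ s := by
    filter_upwards [ae_mem_Icc hs₀] with t ht using hkΦ t ht
  have hkΦae₁ : ∀ᵐ t ∂μ₁, ∀ᵐ s ∂μI, |k t s| ≤ Φ s := by
    filter_upwards [ae_mem_Icc hs₁] with t ht using hkΦ t ht
  have h𝒦₀b := kernel_bound μ₀ hkm hΦm hkΦae₀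
  have h𝒦₁b := kernel_bound μ₁ hkm hΦm hkΦae₁
  have h𝒦₀i : Integrable (fun s => 𝒦₀ s * g s) μI := by
    apply Integrable.mono' (hgΦ.const_mul (μ₀ univ).toReal)
      (h𝒦₀m.mul hgm).aestronglyMeasurable
    filter_upwards [h𝒦₀b, hg0, hΦ0] with s hs h2 h5
    rw [Real.norm_eq_abs, Pi.mul_apply, abs_mul, abs_of_nonneg h2]
    calc |𝒦₀ s| * g s ≤ ((μ₀ univ).toReal * Φ s) * g s :=
          mul_le_mul_of_nonneg_right hs.1 h2
    _ = (μ₀ univ).toReal * (g s * Φ s) := by ring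
  have h𝒦₁i : Integrable (fun s => 𝒦₁ s * g s) μI := by
    apply Integrable.mono' (hgΦ.const_mul (μ₁ univ).toReal)
      (h𝒦₁m.mul hgm).aestronglyMeasurable
    filter_upwards [h𝒦₁b, hg0, hΦ0] with s hs h2 h5
    rw [Real.norm_eq_abs, Pi.mul_apply, abs_mul, abs_of_nonneg h2]
    calc |𝒦₁ s| * g s ≤ ((μ₁ univ).toReal * Φ s) * g s :=
          mul_le_mul_of_nonneg_right hs.1 h2
    _ = (μ₁ univ).toReal * (g s * Φ s) := by ring
  -- nonnegativity of kernel measures: the w_E argument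
  have h𝒦g0 : ∀ (μ : Measure ℝ) (_ : IsFiniteMeasure μ), μ ((Icc (0:ℝ) 1)ᶜ) = 0 →
      Integrable (fun s => (∫ t, k t s ∂μ) * g s) μI →
      (∀ w : ℝ → ℝ, ContinuousOn w (Icc 0 1) → cc * nrm w ≤ minOnIcc w a b →
        0 ≤ ∫ t, w t ∂μ) →
      0 ≤ᵐ[μI] fun s => (∫ t, k t s ∂μ) * g s := by
    intro μ hfin hsupp hint hco
    haveI := hfin
    apply ae_nonneg_of_forall_setIntegral_nonneg hint
    intro E hE _
    set χ : ℝ → ℝ := E.indicator (fun _ => (1:ℝ)) with hχdef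
    have hχm : Measurable χ := measurable_const.indicator hE
    have hχ01 : ∀ s, 0 ≤ χ s ∧ χ s ≤ 1 := by
      intro s
      by_cases hsE : s ∈ E <;> simp [hχdef, indicator, hsE]
    set ψE : ℝ → ℝ := fun s => g s * χ s with hψEdef
    have hψEm : Measurable ψE := hgm.mul hχm
    have hψE0 : 0 ≤ᵐ[μI] ψE := by
      filter_upwards [hg0] with s h1; exact mul_nonneg h1 (hχ01 s).1
    have hψEg : ∀ᵐ s ∂μI, ψE s ≤ g s := by
      filter_upwards [hg0] with s h1
      calc ψE s = g s * χ s := rfl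
      _ ≤ g s * 1 := mul_le_mul_of_nonneg_left (hχ01 s).2 h1
      _ = g s := mul_one _
    set WE : ℝ → ℝ := fun t => ∫ s, k t s * ψE s ∂μI with hWEdef
    set ME : ℝ := ∫ s, Φ s * ψE s ∂μI with hMEdef
    have hΦψEi : Integrable (fun s => Φ s * ψE s) μI := by
      apply Integrable.mono' hgΦ (hΦm.mul hψEm).aestronglyMeasurable
      filter_upwards [hψE0, hψEg, hΦ0, hg0] with s p0 pg pΦ pgg
      rw [Real.norm_eq_abs, Pi.mul_apply, abs_of_nonneg (mul_nonneg pΦ p0)]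
      calc Φ s * ψE s ≤ Φ s * g s := mul_le_mul_of_nonneg_left pg pΦ
      _ = g s * Φ s := mul_comm _ _
    have hbnd : ∀ t ∈ Icc (0:ℝ) 1, ∀ᵐ s ∂μI, ‖k t s * ψE s‖ ≤ Φ s * ψE s := by
      intro t ht
      filter_upwards [hkΦ t ht, hψE0] with s h1 h2
      rw [Real.norm_eq_abs, abs_mul, abs_of_nonneg h2]
      exact mul_le_mul_of_nonneg_right h1 h2
    have hktψi : ∀ t ∈ Icc (0:ℝ) 1, Integrable (fun s => k t s * ψE s) μI := by
      intro t ht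
      exact Integrable.mono' hΦψEi ((sect_meas hkm t).mul hψEm).aestronglyMeasurable
        (hbnd t ht)
    have hME0 : 0 ≤ ME := by
      apply integral_nonneg_of_ae
      filter_upwards [hψE0, hΦ0] with s h1 h2; exact mul_nonneg h2 h1
    have hWEb : ∀ t ∈ Icc (0:ℝ) 1, |WE t| ≤ ME := by
      intro t ht
      have := norm_integral_le_of_norm_le hΦψEi (hbnd t ht)
      rwa [Real.norm_eq_abs] at this
    have hWElow : ∀ t ∈ Icc a b, ct * ME ≤ WE t := by
      intro t ht
      have htI : t ∈ Icc (0:ℝ) 1 := Icc_subset_Icc h0a hb1 ht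
      have h1 : ct * ME = ∫ s, ct * (Φ s * ψE s) ∂μI := by
        rw [integral_const_mul]
      rw [h1]
      apply integral_mono_ae (hΦψEi.const_mul ct) (hktψi t htI)
      filter_upwards [hklow t ht, hψE0] with s hs h2
      calc ct * (Φ s * ψE s) = (ct * Φ s) * ψE s := by ring
      _ ≤ k t s * ψE s := mul_le_mul_of_nonneg_right hs h2
    have hWEc : ContinuousOn WE (Icc 0 1) := by
      intro τ hτ
      apply continuousWithinAt_of_dominated (bound := fun s => Φ s * ψE s)
      · exact Eventually.of_forall
          (fun t => ((sect_meas hkm t).mul hψEm).aestronglyMeasurable)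
      · exact eventually_mem_nhdsWithin.mono (fun t ht => hbnd t ht)
      · exact hΦψEi
      · filter_upwards [hkc τ hτ] with s hs
        have h2 : Tendsto (fun t => k t s) (nhdsWithin τ (Icc 0 1)) (nhds (k τ s)) := by
          rw [tendsto_iff_dist_tendsto_zero]
          simpa [Real.dist_eq] using hs
        exact h2.mul_const (ψE s)
    have hconeWE : cc * nrm WE ≤ minOnIcc WE a b := by
      have h1 : nrm WE ≤ ME := nrm_le hWEb
      calc cc * nrm WE ≤ cc * ME := mul_le_mul_of_nonneg_left h1 hcc.le
      _ ≤ ct * ME := mul_le_mul_of_nonneg_right hccct hME0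
      _ ≤ minOnIcc WE a b := le_minOnIcc hab hWElow
    have h0le : 0 ≤ ∫ t, WE t ∂μ := hco WE hWEc hconeWE
    have hdomE : ∀ᵐ t ∂μ, ∀ᵐ s ∂μI, ‖k t s * ψE s‖ ≤ g s * Φ s := by
      filter_upwards [ae_mem_Icc hsupp] with t ht
      filter_upwards [hbnd t ht, hψEg, hΦ0] with s h1 h2 h3
      calc ‖k t s * ψE s‖ ≤ Φ s * ψE s := h1
      _ ≤ Φ s * g s := mul_le_mul_of_nonneg_left h2 h3
      _ = g s * Φ s := mul_comm _ _
    have fubE := fubini_swap μ hkm hψEm (hgm.mul hΦm) hgΦ hdomE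
    have key : (∫ t, WE t ∂μ) = ∫ s in E, (∫ t, k t s ∂μ) * g s ∂μI := by
      rw [hWEdef]
      rw [fubE.2]
      rw [← integral_indicator hE]
      apply integral_congr_ae (Eventually.of_forall fun s => ?_)
      by_cases hsE : s ∈ E <;>
        simp [hψEdef, hχdef, indicator, hsE]
    rw [key] at h0le
    exact h0le
  have h𝒦₀g0 : 0 ≤ᵐ[μI] fun s => 𝒦₀ s * g s :=
    h𝒦g0 μ₀ inferInstance hs₀ h𝒦₀i (fun w hw hcw => (hcone w hw hcw).1)
  have h𝒦₁g0 : 0 ≤ᵐ[μI] fun s => 𝒦₁ s * g s :=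
    h𝒦g0 μ₁ inferInstance hs₁ h𝒦₁i (fun w hw hcw => (hcone w hw hcw).2)
  -- KK values
  have hKK0μ : KK0 = ∫ s, 𝒦₀ s * g s ∂μI := by rw [hKK0, ii_eq]
  have hKK1μ : KK1 = ∫ s, 𝒦₁ s * g s ∂μI := by rw [hKK1, ii_eq]
  have hKK00 : 0 ≤ KK0 := by rw [hKK0μ]; exact integral_nonneg_of_ae h𝒦₀g0
  have hKK10 : 0 ≤ KK1 := by rw [hKK1μ]; exact integral_nonneg_of_ae h𝒦₁g0
  -- A values
  set A₀ : ℝ := ∫ s, (𝒦₀ s * g s) * φ s ∂μI with hA₀def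
  set A₁ : ℝ := ∫ s, (𝒦₁ s * g s) * φ s ∂μI with hA₁def
  have hw₀ := wint_le hC (h𝒦₀m.mul hgm).aemeasurable h𝒦₀g0 h𝒦₀i
    hφm.aemeasurable hφ0 hφlt
  have hw₁ := wint_le hC (h𝒦₁m.mul hgm).aemeasurable h𝒦₁g0 h𝒦₁i
    hφm.aemeasurable hφ0 hφlt
  have hA₀le : A₀ ≤ C * KK0 := by rw [hKK0μ]; exact hw₀.2.1
  have hA₁le : A₁ ≤ C * KK1 := by rw [hKK1μ]; exact hw₁.2.1
  have hA₀st : 0 < KK0 → A₀ < C * KK0 := by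
    intro h; rw [hKK0μ]; exact hw₀.2.2 (by rw [hKK0μ] at h; exact h)
  have hA₁st : 0 < KK1 → A₁ < C * KK1 := by
    intro h; rw [hKK1μ]; exact hw₁.2.2 (by rw [hKK1μ] at h; exact h)
  have hA₀0 : 0 ≤ A₀ := by
    apply integral_nonneg_of_ae
    filter_upwards [h𝒦₀g0, hφ0] with s h1 h2; exact mul_nonneg h1 h2
  have hA₁0 : 0 ≤ A₁ := by
    apply integral_nonneg_of_ae
    filter_upwards [h𝒦₁g0, hφ0] with s h1 h2; exact mul_nonneg h1 h2
  -- the integral operator term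
  set Fm : ℝ → ℝ := fun t => ∫ s, k t s * ψ s ∂μI with hFmdef
  have hufix : ∀ t ∈ Icc (0:ℝ) 1, u t = γ₀ t * h₀ + γ₁ t * h₁ + Fm t := by
    intro t ht
    rw [hfix t ht, hFmdef]
    congr 1
    rw [ii_eq]
    apply integral_congr_ae (Eventually.of_forall fun s => ?_)
    show k t s * g s * φ s = k t s * ψ s
    rw [hψdef]; ring
  -- integrability of continuous functions and Fm
  have hγint : ∀ (μ : Measure ℝ) (_ : IsFiniteMeasure μ), μ ((Icc (0:ℝ) 1)ᶜ) = 0 →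
      ∀ (γq : ℝ → ℝ), ContinuousOn γq (Icc 0 1) → Integrable γq μ := by
    intro μ hfin hsupp γq hγq
    haveI := hfin
    obtain ⟨B, hB⟩ := isCompact_Icc.exists_bound_of_continuousOn hγq
    have hcont : Continuous (γq ∘ cl) := cont_cl_comp hγq
    have h1 : Integrable (γq ∘ cl) μ := by
      apply Integrable.mono' (integrable_const B) hcont.aestronglyMeasurable
      apply Eventually.of_forall (fun t => ?_)
      exact hB _ (cl_mem t)
    apply h1.congr
    filter_upwards [ae_mem_Icc hsupp] with t ht
    rw [comp_apply, cl_eq ht]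
  have hFmint₀ : Integrable Fm μ₀ := fub₀.1.integral_prod_left
  have hFmint₁ : Integrable Fm μ₁ := fub₁.1.integral_prod_left
  -- decomposition of ∫ u dμ
  have hdec : ∀ (μ : Measure ℝ) (_ : IsFiniteMeasure μ), μ ((Icc (0:ℝ) 1)ᶜ) = 0 →
      Integrable Fm μ →
      (∫ t, u t ∂μ) = (∫ t, γ₀ t ∂μ) * h₀ + (∫ t, γ₁ t ∂μ) * h₁ + ∫ t, Fm t ∂μ := by
    intro μ hfin hsupp hFmint
    haveI := hfin
    have hγ₀i := hγint μ hfin hsupp γ₀ hγ₀c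
    have hγ₁i := hγint μ hfin hsupp γ₁ hγ₁c
    have h1 : (∫ t, u t ∂μ) = ∫ t, (γ₀ t * h₀ + γ₁ t * h₁ + Fm t) ∂μ := by
      apply integral_congr_ae
      filter_upwards [ae_mem_Icc hsupp] with t ht
      exact hufix t ht
    have e1 : Integrable (fun t => γ₀ t * h₀) μ := hγ₀i.mul_const h₀
    have e2 : Integrable (fun t => γ₁ t * h₁) μ := hγ₁i.mul_const h₁
    have q1 : (∫ t, (γ₀ t * h₀ + γ₁ t * h₁ + Fm t) ∂μ)
        = (∫ t, (γ₀ t * h₀ + γ₁ t * h₁) ∂μ) + ∫ t, Fm t ∂μ :=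
      integral_add (e1.add e2) hFmint
    have q2 : (∫ t, (γ₀ t * h₀ + γ₁ t * h₁) ∂μ)
        = (∫ t, γ₀ t * h₀ ∂μ) + (∫ t, γ₁ t * h₁ ∂μ) := integral_add e1 e2
    rw [h1, q1, q2, integral_mul_const, integral_mul_const]
  have hFmA₀ : (∫ t, Fm t ∂μ₀) = A₀ := by
    rw [hFmdef]
    rw [fub₀.2, hA₀def]
    apply integral_congr_ae (Eventually.of_forall fun s => ?_)
    show 𝒦₀ s * ψ s = 𝒦₀ s * g s * φ s
    rw [hψdef]; ring
  have hFmA₁ : (∫ t, Fm t ∂μ₁) = A₁ := by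
    rw [hFmdef]
    rw [fub₁.2, hA₁def]
    apply integral_congr_ae (Eventually.of_forall fun s => ?_)
    show 𝒦₁ s * ψ s = 𝒦₁ s * g s * φ s
    rw [hψdef]; ring
  have hineq₀ : h₀ ≤ a00 * h₀ + a01 * h₁ + A₀ := by
    rw [hadef00, hadef01]
    calc h₀ ≤ ∫ t, u t ∂μ₀ := hhb₀
    _ = (∫ t, γ₀ t ∂μ₀) * h₀ + (∫ t, γ₁ t ∂μ₀) * h₁ + A₀ := by
        rw [hdec μ₀ inferInstance hs₀ hFmint₀, hFmA₀]
    _ = _ := by ring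
  have hineq₁ : h₁ ≤ a10 * h₀ + a11 * h₁ + A₁ := by
    rw [hadef10, hadef11]
    calc h₁ ≤ ∫ t, u t ∂μ₁ := hhb₁
    _ = (∫ t, γ₀ t ∂μ₁) * h₀ + (∫ t, γ₁ t ∂μ₁) * h₁ + A₁ := by
        rw [hdec μ₁ inferInstance hs₁ hFmint₁, hFmA₁]
    _ = _ := by ring
  -- maximizer of |u|
  obtain ⟨tm, htm, habs⟩ := exists_nrm_max hu
  -- bound for the integral term at tm
  have hρm : Measurable (fun s => |k tm s| * g s) := (sect_meas hkm tm).abs.mul hgm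
  have hρ0 : 0 ≤ᵐ[μI] (fun s => |k tm s| * g s) := by
    filter_upwards [hg0] with s h1; exact mul_nonneg (abs_nonneg _) h1
  have hρi : Integrable (fun s => |k tm s| * g s) μI := by
    apply Integrable.mono' hgΦ hρm.aestronglyMeasurable
    filter_upwards [hkΦ tm htm, hg0] with s h1 h2
    rw [Real.norm_eq_abs, abs_of_nonneg (mul_nonneg (abs_nonneg _) h2)]
    calc |k tm s| * g s ≤ Φ s * g s := mul_le_mul_of_nonneg_right h1 h2
    _ = g s * Φ s := mul_comm _ _
  have hwρ := wint_le hC hρm.aemeasurable hρ0 hρi hφm.aemeasurable hφ0 hφlt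
  set W0 : ℝ := ∫ s, |k tm s| * g s ∂μI with hW0def
  set IW : ℝ := ∫ s, (|k tm s| * g s) * φ s ∂μI with hIWdef
  have hW00 : 0 ≤ W0 := integral_nonneg_of_ae hρ0
  have hIWle : IW ≤ C * W0 := hwρ.2.1
  have hIWst : 0 < W0 → IW < C * W0 := hwρ.2.2
  have hIW0 : 0 ≤ IW := by
    apply integral_nonneg_of_ae
    filter_upwards [hρ0, hφ0] with s h1 h2; exact mul_nonneg h1 h2
  have hFmb : |Fm tm| ≤ IW := by
    have hb : ∀ᵐ s ∂μI, ‖k tm s * ψ s‖ ≤ (|k tm s| * g s) * φ s := by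
      filter_upwards [hg0, hφ0] with s h2 h3
      rw [Real.norm_eq_abs, abs_mul, hψdef]
      have : |g s * φ s| = g s * φ s := abs_of_nonneg (mul_nonneg h2 h3)
      rw [this]; ring_nf; exact le_refl _
    have := norm_integral_le_of_norm_le hwρ.1 hb
    rw [Real.norm_eq_abs] at this
    exact this
  -- solve the linear system
  have hsolve := solve2 hh₀ hh₁ ha01 ha10 ha00 ha11 hineq₀ hineq₁
  have hb₀ : D * h₀ ≤ (1 - a11) * A₀ + a01 * A₁ := by rw [hDdef]; exact hsolve.1
  have hb₁ : D * h₁ ≤ a10 * A₀ + (1 - a00) * A₁ := by rw [hDdef]; exact hsolve.2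
  -- the H bounds
  have hh₀S : h₀ ≤ ((1 - a11) * A₀ + a01 * A₁) / D := by
    rw [le_div_iff₀ hD]; linarith [hb₀]
  have hh₁S : h₁ ≤ (a10 * A₀ + (1 - a00) * A₁) / D := by
    rw [le_div_iff₀ hD]; linarith [hb₁]
  have hS₀0 : 0 ≤ ((1 - a11) * A₀ + a01 * A₁) / D := le_trans hh₀ hh₀S
  have hS₁0 : 0 ≤ (a10 * A₀ + (1 - a00) * A₁) / D := le_trans hh₁ hh₁S
  -- the main pointwise chain at tm
  have hmain : r ≤ IW + |γ₀ tm| * (((1 - a11) * A₀ + a01 * A₁) / D)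
      + |γ₁ tm| * ((a10 * A₀ + (1 - a00) * A₁) / D) := by
    have hfx := hufix tm htm
    have e1 : r = |u tm| := habs.symm
    have e2 : |u tm| ≤ |γ₀ tm| * h₀ + |γ₁ tm| * h₁ + |Fm tm| := by
      rw [hfx]
      calc |γ₀ tm * h₀ + γ₁ tm * h₁ + Fm tm|
          ≤ |γ₀ tm * h₀ + γ₁ tm * h₁| + |Fm tm| := abs_add_le _ _
      _ ≤ |γ₀ tm * h₀| + |γ₁ tm * h₁| + |Fm tm| := by
            linarith [abs_add_le (γ₀ tm * h₀) (γ₁ tm * h₁)]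
      _ = |γ₀ tm| * h₀ + |γ₁ tm| * h₁ + |Fm tm| := by
            rw [abs_mul, abs_mul, abs_of_nonneg hh₀, abs_of_nonneg hh₁]
    have e3 : |γ₀ tm| * h₀ ≤ |γ₀ tm| * (((1 - a11) * A₀ + a01 * A₁) / D) :=
      mul_le_mul_of_nonneg_left hh₀S (abs_nonneg _)
    have e4 : |γ₁ tm| * h₁ ≤ |γ₁ tm| * ((a10 * A₀ + (1 - a00) * A₁) / D) :=
      mul_le_mul_of_nonneg_left hh₁S (abs_nonneg _)
    linarith [e2, e3, e4, hFmb]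
  -- the Ψ bound at tm
  have hCm : C * m = r := by
    rw [hCdef]; field_simp
  have hQ : C * W0 + |γ₀ tm| * (((1 - a11) * (C * KK0) + a01 * (C * KK1)) / D)
      + |γ₁ tm| * ((a10 * (C * KK0) + (1 - a00) * (C * KK1)) / D) ≤ r := by
    have hψt := hΨ tm htm
    rw [ii_eq] at hψt
    have hfact : C * W0 + |γ₀ tm| * (((1 - a11) * (C * KK0) + a01 * (C * KK1)) / D)
        + |γ₁ tm| * ((a10 * (C * KK0) + (1 - a00) * (C * KK1)) / D)
        = C * ((∫ s, |k tm s| * g s ∂μI)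
          + (|γ₀ tm| * (1 - a11) / D + |γ₁ tm| * a10 / D) * KK0
          + (|γ₀ tm| * a01 / D + |γ₁ tm| * (1 - a00) / D) * KK1) := by
      rw [hW0def]; ring
    rw [hfact, ← hCm]
    exact mul_le_mul_of_nonneg_left hψt hC.le
  -- strictness of numerators
  have hnum₀ : 0 < (1 - a11) * A₀ + a01 * A₁ →
      (1 - a11) * A₀ + a01 * A₁ < (1 - a11) * (C * KK0) + a01 * (C * KK1) := by
    intro hpos
    by_cases hA0pos : 0 < A₀
    · have hCKK0 : 0 < C * KK0 := lt_of_lt_of_le hA0pos hA₀le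
      have hKK0p : 0 < KK0 := (pos_factors hC.le hKK00 hCKK0).2
      have s1 : (1 - a11) * A₀ < (1 - a11) * (C * KK0) :=
        mul_lt_mul_of_pos_left (hA₀st hKK0p) (by linarith)
      have s2 : a01 * A₁ ≤ a01 * (C * KK1) := mul_le_mul_of_nonneg_left hA₁le ha01
      linarith
    · have hA₀z : A₀ = 0 := le_antisymm (not_lt.1 hA0pos) hA₀0
      have h2 : 0 < a01 * A₁ := by rw [hA₀z] at hpos; linarith
      obtain ⟨ha01p, hA₁p⟩ := pos_factors ha01 hA₁0 h2
      have hCKK1 : 0 < C * KK1 := lt_of_lt_of_le hA₁p hA₁le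
      have hKK1p : 0 < KK1 := (pos_factors hC.le hKK10 hCKK1).2
      have s1 : (1 - a11) * A₀ ≤ (1 - a11) * (C * KK0) :=
        mul_le_mul_of_nonneg_left hA₀le (by linarith)
      have s2 : a01 * A₁ < a01 * (C * KK1) :=
        mul_lt_mul_of_pos_left (hA₁st hKK1p) ha01p
      linarith
  have hnum₁ : 0 < a10 * A₀ + (1 - a00) * A₁ →
      a10 * A₀ + (1 - a00) * A₁ < a10 * (C * KK0) + (1 - a00) * (C * KK1) := by
    intro hpos
    by_cases hA1pos : 0 < A₁
    · have hCKK1 : 0 < C * KK1 := lt_of_lt_of_le hA1pos hA₁le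
      have hKK1p : 0 < KK1 := (pos_factors hC.le hKK10 hCKK1).2
      have s1 : (1 - a00) * A₁ < (1 - a00) * (C * KK1) :=
        mul_lt_mul_of_pos_left (hA₁st hKK1p) (by linarith)
      have s2 : a10 * A₀ ≤ a10 * (C * KK0) := mul_le_mul_of_nonneg_left hA₀le ha10
      linarith
    · have hA₁z : A₁ = 0 := le_antisymm (not_lt.1 hA1pos) hA₁0
      have h2 : 0 < a10 * A₀ := by rw [hA₁z] at hpos; linarith
      obtain ⟨ha10p, hA₀p⟩ := pos_factors ha10 hA₀0 h2
      have hCKK0 : 0 < C * KK0 := lt_of_lt_of_le hA₀p hA₀le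
      have hKK0p : 0 < KK0 := (pos_factors hC.le hKK00 hCKK0).2
      have s1 : (1 - a00) * A₁ ≤ (1 - a00) * (C * KK1) :=
        mul_le_mul_of_nonneg_left hA₁le (by linarith)
      have s2 : a10 * A₀ < a10 * (C * KK0) :=
        mul_lt_mul_of_pos_left (hA₀st hKK0p) ha10p
      linarith
  -- nonstrict comparisons of the three pieces
  have hcmp₂ : |γ₀ tm| * (((1 - a11) * A₀ + a01 * A₁) / D)
      ≤ |γ₀ tm| * (((1 - a11) * (C * KK0) + a01 * (C * KK1)) / D) := by
    apply mul_le_mul_of_nonneg_left _ (abs_nonneg _)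
    apply div_le_div_of_nonneg_right _ hD.le
    have s1 : (1 - a11) * A₀ ≤ (1 - a11) * (C * KK0) :=
      mul_le_mul_of_nonneg_left hA₀le (by linarith)
    have s2 : a01 * A₁ ≤ a01 * (C * KK1) := mul_le_mul_of_nonneg_left hA₁le ha01
    linarith
  have hcmp₃ : |γ₁ tm| * ((a10 * A₀ + (1 - a00) * A₁) / D)
      ≤ |γ₁ tm| * ((a10 * (C * KK0) + (1 - a00) * (C * KK1)) / D) := by
    apply mul_le_mul_of_nonneg_left _ (abs_nonneg _)
    apply div_le_div_of_nonneg_right _ hD.le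
    have s1 : (1 - a00) * A₁ ≤ (1 - a00) * (C * KK1) :=
      mul_le_mul_of_nonneg_left hA₁le (by linarith)
    have s2 : a10 * A₀ ≤ a10 * (C * KK0) := mul_le_mul_of_nonneg_left hA₀le ha10
    linarith
  -- one of the three terms must be positive, giving a strict inequality r < r
  have htri : 0 < IW ∨ 0 < |γ₀ tm| * (((1 - a11) * A₀ + a01 * A₁) / D)
      ∨ 0 < |γ₁ tm| * ((a10 * A₀ + (1 - a00) * A₁) / D) := by
    by_contra hcon
    push_neg at hcon
    obtain ⟨c1, c2, c3⟩ := hcon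
    linarith [hmain, hr]
  rcases htri with hcase | hcase | hcase
  · -- the kernel term is positive
    have hCW0 : 0 < C * W0 := lt_of_lt_of_le hcase hIWle
    have hW0p : 0 < W0 := (pos_factors hC.le hW00 hCW0).2
    have : r < r := by
      calc r ≤ IW + |γ₀ tm| * (((1 - a11) * A₀ + a01 * A₁) / D)
          + |γ₁ tm| * ((a10 * A₀ + (1 - a00) * A₁) / D) := hmain
      _ < C * W0 + |γ₀ tm| * (((1 - a11) * (C * KK0) + a01 * (C * KK1)) / D)
          + |γ₁ tm| * ((a10 * (C * KK0) + (1 - a00) * (C * KK1)) / D) := by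
            linarith [hIWst hW0p, hcmp₂, hcmp₃]
      _ ≤ r := hQ
    exact lt_irrefl r this
  · obtain ⟨hγp, hSp⟩ := pos_factors (abs_nonneg (γ₀ tm)) hS₀0 hcase
    have hnump : 0 < (1 - a11) * A₀ + a01 * A₁ := by
      by_contra hcon
      push_neg at hcon
      have : ((1 - a11) * A₀ + a01 * A₁) / D ≤ 0 := div_nonpos_iff.2 (Or.inr ⟨hcon, hD.le⟩)
      linarith
    have hstrict : |γ₀ tm| * (((1 - a11) * A₀ + a01 * A₁) / D)
        < |γ₀ tm| * (((1 - a11) * (C * KK0) + a01 * (C * KK1)) / D) := by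
      apply mul_lt_mul_of_pos_left _ hγp
      exact div_lt_div_of_pos_right (hnum₀ hnump) hD
    have : r < r := by
      calc r ≤ IW + |γ₀ tm| * (((1 - a11) * A₀ + a01 * A₁) / D)
          + |γ₁ tm| * ((a10 * A₀ + (1 - a00) * A₁) / D) := hmain
      _ < C * W0 + |γ₀ tm| * (((1 - a11) * (C * KK0) + a01 * (C * KK1)) / D)
          + |γ₁ tm| * ((a10 * (C * KK0) + (1 - a00) * (C * KK1)) / D) := by
            linarith [hstrict, hcmp₃, hIWle]
      _ ≤ r := hQ
    exact lt_irrefl r this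
  · obtain ⟨hγp, hSp⟩ := pos_factors (abs_nonneg (γ₁ tm)) hS₁0 hcase
    have hnump : 0 < a10 * A₀ + (1 - a00) * A₁ := by
      by_contra hcon
      push_neg at hcon
      have : (a10 * A₀ + (1 - a00) * A₁) / D ≤ 0 := div_nonpos_iff.2 (Or.inr ⟨hcon, hD.le⟩)
      linarith
    have hstrict : |γ₁ tm| * ((a10 * A₀ + (1 - a00) * A₁) / D)
        < |γ₁ tm| * ((a10 * (C * KK0) + (1 - a00) * (C * KK1)) / D) := by
      apply mul_lt_mul_of_pos_left _ hγp
      exact div_lt_div_of_pos_right (hnum₁ hnump) hD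
    have : r < r := by
      calc r ≤ IW + |γ₀ tm| * (((1 - a11) * A₀ + a01 * A₁) / D)
          + |γ₁ tm| * ((a10 * A₀ + (1 - a00) * A₁) / D) := hmain
      _ < C * W0 + |γ₀ tm| * (((1 - a11) * (C * KK0) + a01 * (C * KK1)) / D)
          + |γ₁ tm| * ((a10 * (C * KK0) + (1 - a00) * (C * KK1)) / D) := by
            linarith [hstrict, hcmp₂, hIWle]
      _ ≤ r := hQ
    exact lt_irrefl r this
lemma bnd_mul_abs {x X y : ℝ} (h0 : 0 ≤ x) (hX : x ≤ X) : x * y ≤ X * |y| := by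
  calc x * y ≤ x * |y| := mul_le_mul_of_nonneg_left (le_abs_self y) h0
  _ ≤ X * |y| := mul_le_mul_of_nonneg_right hX (abs_nonneg y)

lemma ae_vol_of_μI {P : ℝ → Prop} (h : ∀ᵐ s ∂μI, P s) :
    ∀ᵐ s ∂(volume : Measure ℝ), s ∈ uIoc (0:ℝ) 1 → P s := by
  have h2 : ∀ᵐ s ∂(volume : Measure ℝ), s ∈ Icc (0:ℝ) 1 → P s :=
    (ae_restrict_iff' measurableSet_Icc).1 h
  filter_upwards [h2] with s hs hmem
  apply hs
  rw [uIoc_of_le zero_le_one] at hmem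
  exact Ioc_subset_Icc_self hmem

set_option maxHeartbeats 1600000 in
open S17 in
lemma bridge
    (k : ℝ → ℝ → ℝ) (g Φ φ u γ₀ γ₁ : ℝ → ℝ) (μ₀ μ₁ : Measure ℝ)
    (h₀ h₁ a b cc ct m : ℝ) (a00 a01 a10 a11 D KK0 KK1 : ℝ)
    [IsFiniteMeasure μ₀] [IsFiniteMeasure μ₁]
    (hs₀ : μ₀ ((Icc (0:ℝ) 1)ᶜ) = 0) (hs₁ : μ₁ ((Icc (0:ℝ) 1)ᶜ) = 0)
    (h0a : 0 ≤ a) (hab : a ≤ b) (hb1 : b ≤ 1)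
    (hu : ContinuousOn u (Icc 0 1))
    (hkm : Measurable (Function.uncurry k))
    (hkc : ∀ τ ∈ Icc (0:ℝ) 1, ∀ᵐ s ∂μI,
      Tendsto (fun t => |k t s - k τ s|) (nhdsWithin τ (Icc 0 1)) (nhds 0))
    (hΦm : Measurable Φ)
    (hkΦ : ∀ t ∈ Icc (0:ℝ) 1, ∀ᵐ s ∂μI, |k t s| ≤ Φ s)
    (hklow : ∀ t ∈ Icc a b, ∀ᵐ s ∂μI, ct * Φ s ≤ k t s)
    (hct0 : 0 < ct)
    (hgm : Measurable g) (hg0 : 0 ≤ᵐ[μI] g)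
    (hgΦ : Integrable (fun s => g s * Φ s) μI)
    (hcc : 0 < cc) (hccct : cc ≤ ct)
    (hcone : ∀ w : ℝ → ℝ, ContinuousOn w (Icc 0 1) → cc * nrm w ≤ minOnIcc w a b →
      0 ≤ ∫ t, w t ∂μ₀ ∧ 0 ≤ ∫ t, w t ∂μ₁)
    (hγ₀c : ContinuousOn γ₀ (Icc 0 1)) (hγ₁c : ContinuousOn γ₁ (Icc 0 1))
    (hγ₀cone : cc * nrm γ₀ ≤ minOnIcc γ₀ a b) (hγ₁cone : cc * nrm γ₁ ≤ minOnIcc γ₁ a b)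
    (hh₀ : 0 ≤ h₀) (hh₁ : 0 ≤ h₁)
    (hhb₀ : h₀ ≤ ∫ t, u t ∂μ₀) (hhb₁ : h₁ ≤ ∫ t, u t ∂μ₁)
    (hadef00 : a00 = ∫ t, γ₀ t ∂μ₀) (hadef01 : a01 = ∫ t, γ₁ t ∂μ₀)
    (hadef10 : a10 = ∫ t, γ₀ t ∂μ₁) (hadef11 : a11 = ∫ t, γ₁ t ∂μ₁)
    (hDdef : D = (1 - a00) * (1 - a11) - a01 * a10)
    (hKK0 : KK0 = ∫ s in (0:ℝ)..1, (∫ t, k t s ∂μ₀) * g s)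
    (hKK1 : KK1 = ∫ s in (0:ℝ)..1, (∫ t, k t s ∂μ₁) * g s)
    (ha00 : a00 < 1) (ha11 : a11 < 1) (hD : 0 < D)
    (hφae : AEMeasurable φ μI) (hφ0 : ∀ s, 0 ≤ φ s)
    (hm : 0 < m)
    (hmdef : m = sSup ((fun t' => (∫ s in (0:ℝ)..1, |k t' s| * g s) +
      (|γ₀ t'| * (1 - a11) / D + |γ₁ t'| * a10 / D) * KK0 +
      (|γ₀ t'| * a01 / D + |γ₁ t'| * (1 - a00) / D) * KK1) '' Icc (0:ℝ) 1))
    (hφzero : ∀ᵐ s ∂μI, u s = 0 → φ s = 0)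
    (hφlt' : ∀ s ∈ Icc (0:ℝ) 1, u s ≠ 0 → φ s < m⁻¹ * |u s|)
    (hfix : ∀ t ∈ Icc (0:ℝ) 1,
      u t = γ₀ t * h₀ + γ₁ t * h₁ + ∫ s in (0:ℝ)..1, k t s * g s * φ s) :
    nrm u ≤ 0 := by
  by_contra hcontra
  push_neg at hcontra
  -- measurable representative of φ
  set φ' : ℝ → ℝ := hφae.mk φ with hφ'def
  have hφ'm : Measurable φ' := hφae.measurable_mk
  have heq : φ =ᵐ[μI] φ' := hφae.ae_eq_mk
  have hφ'0 : 0 ≤ᵐ[μI] φ' := by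
    filter_upwards [heq] with s hs; rw [← hs]; exact hφ0 s
  have hφ'lt : ∀ᵐ s ∂μI, φ' s < m⁻¹ * nrm u := by
    filter_upwards [heq, ae_mem_Icc_self, hφzero] with s hs hsI hz
    rw [← hs]
    by_cases hus : u s = 0
    · rw [hz hus]
      positivity
    · calc φ s < m⁻¹ * |u s| := hφlt' s hsI hus
      _ ≤ m⁻¹ * nrm u := by
          apply mul_le_mul_of_nonneg_left (abs_le_nrm hu hsI)
          positivity
  have hfix' : ∀ t ∈ Icc (0:ℝ) 1,
      u t = γ₀ t * h₀ + γ₁ t * h₁ + ∫ s in (0:ℝ)..1, k t s * g s * φ' s := by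
    intro t ht
    rw [hfix t ht]
    congr 1
    apply intervalIntegral.integral_congr_ae
    filter_upwards [ae_vol_of_μI heq] with s hs hmem
    rw [hs hmem]
  -- nonnegativity of the cross coefficients
  have ha01' : 0 ≤ a01 := by rw [hadef01]; exact (hcone γ₁ hγ₁c hγ₁cone).1
  have ha10' : 0 ≤ a10 := by rw [hadef10]; exact (hcone γ₀ hγ₀c hγ₀cone).2
  -- the Ψ bound
  have hΨ : ∀ t ∈ Icc (0:ℝ) 1,
      (∫ s in (0:ℝ)..1, |k t s| * g s) +
      (|γ₀ t| * (1 - a11) / D + |γ₁ t| * a10 / D) * KK0 +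
      (|γ₀ t| * a01 / D + |γ₁ t| * (1 - a00) / D) * KK1 ≤ m := by
    obtain ⟨B₀, hB₀⟩ := isCompact_Icc.exists_bound_of_continuousOn hγ₀c
    obtain ⟨B₁, hB₁⟩ := isCompact_Icc.exists_bound_of_continuousOn hγ₁c
    have hB₀' : ∀ t ∈ Icc (0:ℝ) 1, |γ₀ t| ≤ B₀ := by
      intro t ht; have := hB₀ t ht; rwa [Real.norm_eq_abs] at this
    have hB₁' : ∀ t ∈ Icc (0:ℝ) 1, |γ₁ t| ≤ B₁ := by
      intro t ht; have := hB₁ t ht; rwa [Real.norm_eq_abs] at this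
    have hB₀0 : 0 ≤ B₀ := le_trans (abs_nonneg _) (hB₀' 0 (by norm_num))
    have hB₁0 : 0 ≤ B₁ := le_trans (abs_nonneg _) (hB₁' 0 (by norm_num))
    set M1 : ℝ := ∫ s, g s * Φ s ∂μI with hM1def
    have hW0b : ∀ t ∈ Icc (0:ℝ) 1, (∫ s in (0:ℝ)..1, |k t s| * g s) ≤ M1 := by
      intro t ht
      have hii : (∫ s in (0:ℝ)..1, |k t s| * g s) = ∫ s, |k t s| * g s ∂μI := by
        rw [intervalIntegral.integral_of_le zero_le_one]
        exact setIntegral_congr_set Ioc_ae_eq_Icc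
      rw [hii, hM1def]
      have hρi : Integrable (fun s => |k t s| * g s) μI := by
        apply Integrable.mono' hgΦ ((sect_meas hkm t).abs.mul hgm).aestronglyMeasurable
        filter_upwards [hkΦ t ht, hg0] with s h1 h2
        rw [Real.norm_eq_abs, Pi.mul_apply, abs_of_nonneg (mul_nonneg (abs_nonneg _) h2)]
        calc |k t s| * g s ≤ Φ s * g s := mul_le_mul_of_nonneg_right h1 h2
        _ = g s * Φ s := mul_comm _ _
      apply integral_mono_ae hρi hgΦ
      filter_upwards [hkΦ t ht, hg0] with s h1 h2
      calc |k t s| * g s ≤ Φ s * g s := mul_le_mul_of_nonneg_right h1 h2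
      _ = g s * Φ s := mul_comm _ _
    set q₀ : ℝ := (B₀ * (1 - a11) + B₁ * a10) / D with hq₀def
    set q₁ : ℝ := (B₀ * a01 + B₁ * (1 - a00)) / D with hq₁def
    have hq₀0 : 0 ≤ q₀ := by
      apply div_nonneg _ hD.le
      have := mul_nonneg hB₀0 (by linarith : (0:ℝ) ≤ 1 - a11)
      have := mul_nonneg hB₁0 ha10'
      linarith
    have hq₁0 : 0 ≤ q₁ := by
      apply div_nonneg _ hD.le
      have := mul_nonneg hB₁0 (by linarith : (0:ℝ) ≤ 1 - a00)
      have := mul_nonneg hB₀0 ha01'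
      linarith
    have hcoef₀ : ∀ t ∈ Icc (0:ℝ) 1,
        0 ≤ |γ₀ t| * (1 - a11) / D + |γ₁ t| * a10 / D ∧
        |γ₀ t| * (1 - a11) / D + |γ₁ t| * a10 / D ≤ q₀ := by
      intro t ht
      constructor
      · have h1 : 0 ≤ |γ₀ t| * (1 - a11) := mul_nonneg (abs_nonneg _) (by linarith)
        have h2 : 0 ≤ |γ₁ t| * a10 := mul_nonneg (abs_nonneg _) ha10'
        have := div_nonneg h1 hD.le
        have := div_nonneg h2 hD.le
        linarith
      · rw [hq₀def, ← add_div]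
        apply div_le_div_of_nonneg_right _ hD.le
        have h1 : |γ₀ t| * (1 - a11) ≤ B₀ * (1 - a11) :=
          mul_le_mul_of_nonneg_right (hB₀' t ht) (by linarith)
        have h2 : |γ₁ t| * a10 ≤ B₁ * a10 :=
          mul_le_mul_of_nonneg_right (hB₁' t ht) ha10'
        linarith
    have hcoef₁ : ∀ t ∈ Icc (0:ℝ) 1,
        0 ≤ |γ₀ t| * a01 / D + |γ₁ t| * (1 - a00) / D ∧
        |γ₀ t| * a01 / D + |γ₁ t| * (1 - a00) / D ≤ q₁ := by
      intro t ht
      constructor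
      · have h1 : 0 ≤ |γ₀ t| * a01 := mul_nonneg (abs_nonneg _) ha01'
        have h2 : 0 ≤ |γ₁ t| * (1 - a00) := mul_nonneg (abs_nonneg _) (by linarith)
        have := div_nonneg h1 hD.le
        have := div_nonneg h2 hD.le
        linarith
      · rw [hq₁def, ← add_div]
        apply div_le_div_of_nonneg_right _ hD.le
        have h1 : |γ₀ t| * a01 ≤ B₀ * a01 :=
          mul_le_mul_of_nonneg_right (hB₀' t ht) ha01'
        have h2 : |γ₁ t| * (1 - a00) ≤ B₁ * (1 - a00) :=
          mul_le_mul_of_nonneg_right (hB₁' t ht) (by linarith)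
        linarith
    have hbdd : BddAbove ((fun t' => (∫ s in (0:ℝ)..1, |k t' s| * g s) +
        (|γ₀ t'| * (1 - a11) / D + |γ₁ t'| * a10 / D) * KK0 +
        (|γ₀ t'| * a01 / D + |γ₁ t'| * (1 - a00) / D) * KK1) '' Icc (0:ℝ) 1) := by
      refine ⟨M1 + q₀ * |KK0| + q₁ * |KK1|, ?_⟩
      rintro x ⟨t, ht, rfl⟩
      have e1 := hW0b t ht
      have e2 := bnd_mul_abs (hcoef₀ t ht).1 (hcoef₀ t ht).2 (y := KK0)
      have e3 := bnd_mul_abs (hcoef₁ t ht).1 (hcoef₁ t ht).2 (y := KK1)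
      simp only [upperBounds, mem_setOf_eq]
      linarith
    intro t ht
    rw [hmdef]
    exact le_csSup hbdd ⟨t, ht, rfl⟩
  exact core k g Φ φ' u γ₀ γ₁ μ₀ μ₁ h₀ h₁ a b cc ct m a00 a01 a10 a11 D KK0 KK1
    hs₀ hs₁ h0a hab hb1 hu hkm hkc hΦm hkΦ hklow hct0 hgm hg0 hgΦ hcc hccct hcone
    hγ₀c hγ₁c hh₀ hh₁ hhb₀ hhb₁ hadef00 hadef01 hadef10 hadef11 hDdef hKK0 hKK1
    ha01' ha10' ha00 ha11 hD hφ'm hφ'0 hm hcontra hφ'lt hΨ hfix'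
lemma flim {F : ℝ → ℝ → ℝ} {N : ℝ} (hc : Continuous (fun p : ℝ × ℝ => F p.1 p.2))
    (h : ∀ x y, x ≠ 0 → F x y < N * |x|) (hF0 : ∀ x y, 0 ≤ F x y) (y : ℝ) : F 0 y = 0 := by
  refine le_antisymm ?_ (hF0 0 y)
  have hseq : Tendsto (fun n : ℕ => F (1/(n+1)) y) atTop (nhds (F 0 y)) := by
    have h1 : Tendsto (fun n : ℕ => ((1:ℝ)/((n:ℝ)+1), y)) atTop (nhds (0, y)) :=
      (tendsto_one_div_add_atTop_nhds_zero_nat).prodMk_nhds tendsto_const_nhds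
    exact (hc.tendsto (0, y)).comp h1
  have hbd : Tendsto (fun n : ℕ => N * |1/((n:ℝ)+1)|) atTop (nhds 0) := by
    have h2 : Tendsto (fun n : ℕ => |(1:ℝ)/((n:ℝ)+1)|) atTop (nhds |0|) :=
      tendsto_one_div_add_atTop_nhds_zero_nat.abs
    simpa using h2.const_mul N
  exact le_of_tendsto_of_tendsto' hseq hbd
    (fun n => (h _ y (by positivity)).le)

noncomputable def Dv (γ₀ γ₁ : ℝ → ℝ) (μ₀ μ₁ : Measure ℝ) : ℝ :=
  (1 - ∫ t, γ₀ t ∂μ₀) * (1 - ∫ t, γ₁ t ∂μ₁) - (∫ t, γ₁ t ∂μ₀) * (∫ t, γ₀ t ∂μ₁)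

noncomputable def mVal (k : ℝ → ℝ → ℝ) (g γ₀ γ₁ : ℝ → ℝ) (μ₀ μ₁ : Measure ℝ) : ℝ :=
  sSup ((fun t' => (∫ s in (0:ℝ)..1, |k t' s| * g s) +
    (|γ₀ t'| * (1 - ∫ t'', γ₁ t'' ∂μ₁) / Dv γ₀ γ₁ μ₀ μ₁ +
     |γ₁ t'| * (∫ t'', γ₀ t'' ∂μ₁) / Dv γ₀ γ₁ μ₀ μ₁) *
      (∫ s in (0:ℝ)..1, (∫ t'', k t'' s ∂μ₀) * g s) +
    (|γ₀ t'| * (∫ t'', γ₁ t'' ∂μ₀) / Dv γ₀ γ₁ μ₀ μ₁ +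
     |γ₁ t'| * (1 - ∫ t'', γ₀ t'' ∂μ₀) / Dv γ₀ γ₁ μ₀ μ₁) *
      (∫ s in (0:ℝ)..1, (∫ t'', k t'' s ∂μ₁) * g s)) '' Icc (0:ℝ) 1)

set_option maxHeartbeats 2000000
open S17

theorem stmt17
    (k : Fin 2 → ℝ → ℝ → ℝ) (g : Fin 2 → ℝ → ℝ) (f : Fin 2 → ℝ → ℝ → ℝ → ℝ)
    (γ : Fin 2 → Fin 2 → ℝ → ℝ) (H : Fin 2 → Fin 2 → (ℝ → ℝ) → (ℝ → ℝ) → ℝ)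
    (a b : Fin 2 → ℝ) (Φ : Fin 2 → ℝ → ℝ) (ct : Fin 2 → ℝ) (cγ : Fin 2 → Fin 2 → ℝ)
    (c : Fin 2 → ℝ) (K : Set ((ℝ → ℝ) × (ℝ → ℝ)))
    (hf_meas : ∀ i (x y : ℝ), Measurable (fun t => f i t x y))
    (hf_cont : ∀ i, ∀ᵐ t ∂(volume.restrict (Icc (0:ℝ) 1)),
      Continuous (fun p : ℝ × ℝ => f i t p.1 p.2))
    (hf_nonneg : ∀ i t x y, 0 ≤ f i t x y)
    (hf_bdd : ∀ i, ∀ r > 0, ∃ C, ∀ᵐ t ∂(volume.restrict (Icc (0:ℝ) 1)),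
      ∀ x ∈ Icc (-r) r, ∀ y ∈ Icc (-r) r, f i t x y ≤ C)
    (hk_meas : ∀ i, Measurable (Function.uncurry (k i)))
    (hk_cont : ∀ i, ∀ τ ∈ Icc (0:ℝ) 1, ∀ᵐ s ∂(volume.restrict (Icc (0:ℝ) 1)),
      Filter.Tendsto (fun t => |k i t s - k i τ s|) (nhdsWithin τ (Icc (0:ℝ) 1)) (nhds 0))
    (hab : ∀ i, 0 ≤ a i ∧ a i ≤ b i ∧ b i ≤ 1)
    (hΦ_meas : ∀ i, Measurable (Φ i))
    (hΦ_bdd : ∀ i, ∃ C, ∀ᵐ s ∂(volume.restrict (Icc (0:ℝ) 1)), |Φ i s| ≤ C)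
    (hct : ∀ i, ct i ∈ Ioc (0:ℝ) 1)
    (hkΦ_abs : ∀ i, ∀ t ∈ Icc (0:ℝ) 1, ∀ᵐ s ∂(volume.restrict (Icc (0:ℝ) 1)),
      |k i t s| ≤ Φ i s)
    (hkΦ_low : ∀ i, ∀ t ∈ Icc (a i) (b i), ∀ᵐ s ∂(volume.restrict (Icc (0:ℝ) 1)),
      ct i * Φ i s ≤ k i t s)
    (hg_meas : ∀ i, Measurable (g i))
    (hg_nonneg : ∀ i, ∀ᵐ s ∂(volume.restrict (Icc (0:ℝ) 1)), 0 ≤ g i s)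
    (hgΦ_int : ∀ i, IntegrableOn (fun s => g i s * Φ i s) (Icc (0:ℝ) 1))
    (hΦg_pos : ∀ i, 0 < ∫ s in (a i)..(b i), Φ i s * g i s)
    (hγ_cont : ∀ i j, ContinuousOn (γ i j) (Icc (0:ℝ) 1))
    (hcγ : ∀ i j, cγ i j ∈ Ioc (0:ℝ) 1)
    (hγ_low : ∀ i j, ∀ t ∈ Icc (a i) (b i), cγ i j * nrm (γ i j) ≤ γ i j t)
    (hc : ∀ i, c i = min (ct i) (min (cγ i 0) (cγ i 1)))
    (hK : K = {w : (ℝ → ℝ) × (ℝ → ℝ) |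
      (ContinuousOn w.1 (Icc (0:ℝ) 1) ∧ c 0 * nrm w.1 ≤ minOnIcc w.1 (a 0) (b 0)) ∧
      (ContinuousOn w.2 (Icc (0:ℝ) 1) ∧ c 1 * nrm w.2 ≤ minOnIcc w.2 (a 1) (b 1))})
    (hH_nonneg : ∀ i j, ∀ w ∈ K, 0 ≤ H i j w.1 w.2)
    (hH_cont : ∀ i j, ∀ w ∈ K, ∀ ε > 0, ∃ δ > 0, ∀ w' ∈ K,
      max (nrm (fun t => w.1 t - w'.1 t)) (nrm (fun t => w.2 t - w'.2 t)) < δ →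
      |H i j w.1 w.2 - H i j w'.1 w'.2| < ε)
    (hH_bdd : ∀ i j, ∀ M : ℝ, ∃ M', ∀ w ∈ K, max (nrm w.1) (nrm w.2) ≤ M → H i j w.1 w.2 ≤ M')
    (μA : Fin 2 → Fin 2 → Measure ℝ)
    (hN : ∀ i, NCond k g f γ H K μA i) :
    ∀ w ∈ K, (∀ t ∈ Icc (0:ℝ) 1, w.1 t = Tsys k g f γ H 0 w.1 w.2 t ∧
          w.2 t = Tsys k g f γ H 1 w.1 w.2 t) →
      ∀ t ∈ Icc (0:ℝ) 1, w.1 t = 0 ∧ w.2 t = 0 := by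
  intro w hwK hfixpt
  have hw := hwK
  rw [hK] at hw
  obtain ⟨⟨hw1c, hw1cone⟩, ⟨hw2c, hw2cone⟩⟩ := hw
  -- general facts about the cone constants and γ
  have hcle : ∀ i j, c i ≤ cγ i j := by
    intro i j
    rw [hc i]
    fin_cases j
    · exact le_trans (min_le_right _ _) (min_le_left _ _)
    · exact le_trans (min_le_right _ _) (min_le_right _ _)
  have hγcone : ∀ i j, c i * nrm (γ i j) ≤ minOnIcc (γ i j) (a i) (b i) := by
    intro i j
    apply le_minOnIcc (hab i).2.1
    intro t ht
    calc c i * nrm (γ i j) ≤ cγ i j * nrm (γ i j) :=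
          mul_le_mul_of_nonneg_right (hcle i j) (nrm_nonneg (hγ_cont i j))
    _ ≤ γ i j t := hγ_low i j t ht
  have hcpos : ∀ i, 0 < c i := by
    intro i
    rw [hc i]
    exact lt_min (hct i).1 (lt_min (hcγ i 0).1 (hcγ i 1).1)
  have hcct : ∀ i, c i ≤ ct i := fun i => by rw [hc i]; exact min_le_left _ _
  -- component 0
  have key0 : nrm w.1 ≤ 0 := by
    have hN1 := (hN 0).1
    have hN2 := (hN 0).2.1
    have hN3 := (hN 0).2.2.1
    have hN4 := (hN 0).2.2.2.1
    haveI := (hN1 0).1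
    haveI := (hN1 1).1
    have hN5 : ∀ t ∈ Icc (0:ℝ) 1, ∀ x y : ℝ, x ≠ 0 →
        f 0 t x y < (mVal (k 0) (g 0) (γ 0 0) (γ 0 1) (μA 0 0) (μA 0 1))⁻¹ * |x| :=
      fun t ht x y hx => (hN 0).2.2.2.2 t ht x y hx
    set M := mVal (k 0) (g 0) (γ 0 0) (γ 0 1) (μA 0 0) (μA 0 1) with hMdef
    have hm : 0 < M := by
      have h5 := hN5 0 (by norm_num) 1 1 one_ne_zero
      rw [abs_one, mul_one] at h5
      exact inv_pos.mp (lt_of_le_of_lt (hf_nonneg 0 0 1 1) h5)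
    have hφae : AEMeasurable (fun s => f 0 s (w.1 s) (w.2 s)) μI := by
      have h1 := phi_aemeasurable (f := f 0) (hf_meas 0) (hf_cont 0)
        (cont_cl_comp hw1c) (cont_cl_comp hw2c)
      apply h1.congr
      filter_upwards [ae_mem_Icc_self] with s hs
      show f 0 s (w.1 (cl s)) (w.2 (cl s)) = f 0 s (w.1 s) (w.2 s)
      rw [cl_eq hs]
    have hφzero : ∀ᵐ s ∂μI, w.1 s = 0 → f 0 s (w.1 s) (w.2 s) = 0 := by
      filter_upwards [hf_cont 0, ae_mem_Icc_self] with s hcs hsI hz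
      rw [hz]
      exact flim hcs (fun x y hx => hN5 s hsI x y hx)
        (fun x y => hf_nonneg 0 s x y) (w.2 s)
    have hconeμ : ∀ w' : ℝ → ℝ, ContinuousOn w' (Icc 0 1) →
        c 0 * nrm w' ≤ minOnIcc w' (a 0) (b 0) →
        0 ≤ ∫ t, w' t ∂(μA 0 0) ∧ 0 ≤ ∫ t, w' t ∂(μA 0 1) := by
      intro w' h1 h2
      have hmem : ((w', γ 1 0) : (ℝ → ℝ) × (ℝ → ℝ)) ∈ K := by
        rw [hK]; exact ⟨⟨h1, h2⟩, ⟨hγ_cont 1 0, hγcone 1 0⟩⟩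
      constructor
      · have hb : H 0 0 w' (γ 1 0) ≤ ∫ t, w' t ∂(μA 0 0) := hN4 0 _ hmem
        exact le_trans (hH_nonneg 0 0 _ hmem) hb
      · have hb : H 0 1 w' (γ 1 0) ≤ ∫ t, w' t ∂(μA 0 1) := hN4 1 _ hmem
        exact le_trans (hH_nonneg 0 1 _ hmem) hb
    exact bridge (k 0) (g 0) (Φ 0) (fun s => f 0 s (w.1 s) (w.2 s)) w.1 (γ 0 0) (γ 0 1)
      (μA 0 0) (μA 0 1) (H 0 0 w.1 w.2) (H 0 1 w.1 w.2) (a 0) (b 0) (c 0) (ct 0) M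
      (∫ t, γ 0 0 t ∂(μA 0 0)) (∫ t, γ 0 1 t ∂(μA 0 0))
      (∫ t, γ 0 0 t ∂(μA 0 1)) (∫ t, γ 0 1 t ∂(μA 0 1))
      (Dv (γ 0 0) (γ 0 1) (μA 0 0) (μA 0 1))
      (∫ s in (0:ℝ)..1, (∫ t, k 0 t s ∂(μA 0 0)) * g 0 s)
      (∫ s in (0:ℝ)..1, (∫ t, k 0 t s ∂(μA 0 1)) * g 0 s)
      ((hN1 0).2) ((hN1 1).2) (hab 0).1 (hab 0).2.1 (hab 0).2.2
      hw1c (hk_meas 0) (hk_cont 0) (hΦ_meas 0) (hkΦ_abs 0) (hkΦ_low 0) (hct 0).1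
      (hg_meas 0) (hg_nonneg 0) (hgΦ_int 0) (hcpos 0) (hcct 0) hconeμ
      (hγ_cont 0 0) (hγ_cont 0 1) (hγcone 0 0) (hγcone 0 1)
      (hH_nonneg 0 0 w hwK) (hH_nonneg 0 1 w hwK)
      (hN4 0 w hwK) (hN4 1 w hwK)
      rfl rfl rfl rfl rfl rfl rfl
      (hN2 0) (hN2 1) hN3
      hφae (fun s => hf_nonneg 0 s _ _) hm (by rw [hMdef]; rfl)
      hφzero (fun s hs h => hN5 s hs _ _ h)
      (fun t ht => (hfixpt t ht).1)
  -- component 1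
  have key1 : nrm w.2 ≤ 0 := by
    have hN1 := (hN 1).1
    have hN2 := (hN 1).2.1
    have hN3 := (hN 1).2.2.1
    have hN4 := (hN 1).2.2.2.1
    haveI := (hN1 0).1
    haveI := (hN1 1).1
    have hN5 : ∀ t ∈ Icc (0:ℝ) 1, ∀ x y : ℝ, y ≠ 0 →
        f 1 t x y < (mVal (k 1) (g 1) (γ 1 0) (γ 1 1) (μA 1 0) (μA 1 1))⁻¹ * |y| :=
      fun t ht x y hy => (hN 1).2.2.2.2 t ht x y hy
    set M := mVal (k 1) (g 1) (γ 1 0) (γ 1 1) (μA 1 0) (μA 1 1) with hMdef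
    have hm : 0 < M := by
      have h5 := hN5 0 (by norm_num) 1 1 one_ne_zero
      rw [abs_one, mul_one] at h5
      exact inv_pos.mp (lt_of_le_of_lt (hf_nonneg 1 0 1 1) h5)
    have hφae : AEMeasurable (fun s => f 1 s (w.1 s) (w.2 s)) μI := by
      have h1 := phi_aemeasurable (f := f 1) (hf_meas 1) (hf_cont 1)
        (cont_cl_comp hw1c) (cont_cl_comp hw2c)
      apply h1.congr
      filter_upwards [ae_mem_Icc_self] with s hs
      show f 1 s (w.1 (cl s)) (w.2 (cl s)) = f 1 s (w.1 s) (w.2 s)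
      rw [cl_eq hs]
    have hφzero : ∀ᵐ s ∂μI, w.2 s = 0 → f 1 s (w.1 s) (w.2 s) = 0 := by
      filter_upwards [hf_cont 1, ae_mem_Icc_self] with s hcs hsI hz
      rw [hz]
      have hcs' : Continuous (fun p : ℝ × ℝ => f 1 s p.2 p.1) := hcs.comp continuous_swap
      exact flim hcs' (fun x y hx => hN5 s hsI y x hx)
        (fun x y => hf_nonneg 1 s y x) (w.1 s)
    have hconeμ : ∀ w' : ℝ → ℝ, ContinuousOn w' (Icc 0 1) →
        c 1 * nrm w' ≤ minOnIcc w' (a 1) (b 1) →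
        0 ≤ ∫ t, w' t ∂(μA 1 0) ∧ 0 ≤ ∫ t, w' t ∂(μA 1 1) := by
      intro w' h1 h2
      have hmem : ((γ 0 0, w') : (ℝ → ℝ) × (ℝ → ℝ)) ∈ K := by
        rw [hK]; exact ⟨⟨hγ_cont 0 0, hγcone 0 0⟩, ⟨h1, h2⟩⟩
      constructor
      · have hb : H 1 0 (γ 0 0) w' ≤ ∫ t, w' t ∂(μA 1 0) := hN4 0 _ hmem
        exact le_trans (hH_nonneg 1 0 _ hmem) hb
      · have hb : H 1 1 (γ 0 0) w' ≤ ∫ t, w' t ∂(μA 1 1) := hN4 1 _ hmem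
        exact le_trans (hH_nonneg 1 1 _ hmem) hb
    exact bridge (k 1) (g 1) (Φ 1) (fun s => f 1 s (w.1 s) (w.2 s)) w.2 (γ 1 0) (γ 1 1)
      (μA 1 0) (μA 1 1) (H 1 0 w.1 w.2) (H 1 1 w.1 w.2) (a 1) (b 1) (c 1) (ct 1) M
      (∫ t, γ 1 0 t ∂(μA 1 0)) (∫ t, γ 1 1 t ∂(μA 1 0))
      (∫ t, γ 1 0 t ∂(μA 1 1)) (∫ t, γ 1 1 t ∂(μA 1 1))
      (Dv (γ 1 0) (γ 1 1) (μA 1 0) (μA 1 1))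
      (∫ s in (0:ℝ)..1, (∫ t, k 1 t s ∂(μA 1 0)) * g 1 s)
      (∫ s in (0:ℝ)..1, (∫ t, k 1 t s ∂(μA 1 1)) * g 1 s)
      ((hN1 0).2) ((hN1 1).2) (hab 1).1 (hab 1).2.1 (hab 1).2.2
      hw2c (hk_meas 1) (hk_cont 1) (hΦ_meas 1) (hkΦ_abs 1) (hkΦ_low 1) (hct 1).1
      (hg_meas 1) (hg_nonneg 1) (hgΦ_int 1) (hcpos 1) (hcct 1) hconeμ
      (hγ_cont 1 0) (hγ_cont 1 1) (hγcone 1 0) (hγcone 1 1)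
      (hH_nonneg 1 0 w hwK) (hH_nonneg 1 1 w hwK)
      (hN4 0 w hwK) (hN4 1 w hwK)
      rfl rfl rfl rfl rfl rfl rfl
      (hN2 0) (hN2 1) hN3
      hφae (fun s => hf_nonneg 1 s _ _) hm (by rw [hMdef]; rfl)
      hφzero (fun s hs h => hN5 s hs _ _ h)
      (fun t ht => (hfixpt t ht).2)
  intro t ht
  constructor
  · exact abs_nonpos_iff.mp (le_trans (abs_le_nrm hw1c ht) key0)
  · exact abs_nonpos_iff.mp (le_trans (abs_le_nrm hw2c ht) key1)

end Stmt17Aux
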